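/- Let k > 0, α ≥ 0, and 0 < β < d with β < 2(k − α). Then there is a finite constant C such that for every h ∈ (0,1] and every ξ ∈ ℝ^d, ∫_{{ζ : ‖ξ − ζ‖ > 1}} ‖ζ‖^{β−d} (1 + ‖ξ − ζ‖²)^{α} (sin((h/2)‖ξ − ζ‖^k))² / ‖ξ − ζ‖^{2k} dζ ≤ C h^{2 − (β + 2α)/k}. -/

import Mathlib

open Real MeasureTheory
open Set Function Metric Measure
open scoped ENNReal

section helpers

variable {E : Type*} [NormedAddCommGroup E] [NormedSpace ℝ E] [Nontrivial E]
  [MeasurableSpace E] [BorelSpace E] [FiniteDimensional ℝ E]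
  (μ : Measure E) [μ.IsAddHaarMeasure]

lemma my_lintegral_radial (f : ℝ → ℝ≥0∞) (hf : Measurable f) :
    ∫⁻ x, f ‖x‖ ∂μ
      = μ.toSphere univ *
        ∫⁻ y in Ioi (0:ℝ), ENNReal.ofReal (y ^ (Module.finrank ℝ E - 1)) * f y := by
  have h4 : ∫⁻ y : Ioi (0:ℝ), f ↑y ∂(Measure.volumeIoiPow (Module.finrank ℝ E - 1))
      = ∫⁻ y in Ioi (0:ℝ), ENNReal.ofReal (y ^ (Module.finrank ℝ E - 1)) * f y := by
    rw [Measure.volumeIoiPow, lintegral_withDensity_eq_lintegral_mul _ (by fun_prop)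
      (show Measurable fun y : Ioi (0:ℝ) => f ↑y from hf.comp measurable_subtype_coe),
      ← lintegral_subtype_comap measurableSet_Ioi
        (fun y => ENNReal.ofReal (y ^ (Module.finrank ℝ E - 1)) * f y)]
    rfl
  calc
    ∫⁻ x, f ‖x‖ ∂μ = ∫⁻ x : ({(0)}ᶜ : Set E), f ‖x.1‖ ∂(μ.comap (↑)) := by
      rw [lintegral_subtype_comap (measurableSet_singleton _).compl fun x ↦ f (‖x‖),
        restrict_compl_singleton]
    _ = ∫⁻ x : ({(0)}ᶜ : Set E),
          (f ∘ (↑) ∘ Prod.snd) ((homeomorphUnitSphereProd E) x) ∂(μ.comap (↑)) :=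
      lintegral_congr fun x => by simp
    _ = ∫⁻ x : sphere (0 : E) 1 × Ioi (0 : ℝ), (f ∘ (↑) ∘ Prod.snd) x
          ∂μ.toSphere.prod (.volumeIoiPow (Module.finrank ℝ E - 1)) :=
      μ.measurePreserving_homeomorphUnitSphereProd.lintegral_comp_emb
        (Homeomorph.measurableEmbedding _) (f ∘ (↑) ∘ Prod.snd)
    _ = μ.toSphere univ *
        ∫⁻ y : Ioi (0:ℝ), f y ∂(Measure.volumeIoiPow (Module.finrank ℝ E - 1)) := by
      rw [lintegral_prod _ ((hf.comp (measurable_subtype_coe.comp measurable_snd)).aemeasurable)]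
      simp only [Function.comp_apply]
      rw [lintegral_const, mul_comm]
    _ = _ := by rw [h4]

lemma my_radial_set {d : ℕ} (hd : 1 ≤ d) (S : Set ℝ) (hS : MeasurableSet S)
    (f : ℝ → ℝ≥0∞) (hf : Measurable f) :
    ∫⁻ x in {x : EuclideanSpace ℝ (Fin d) | ‖x‖ ∈ S}, f ‖x‖
      = (volume : Measure (EuclideanSpace ℝ (Fin d))).toSphere Set.univ *
        ∫⁻ y in S ∩ Ioi (0:ℝ), ENNReal.ofReal (y ^ (d - 1)) * f y := by
  haveI : Nonempty (Fin d) := ⟨⟨0, hd⟩⟩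
  haveI : Nontrivial (EuclideanSpace ℝ (Fin d)) := inferInstance
  have hset : {x : EuclideanSpace ℝ (Fin d) | ‖x‖ ∈ S} = (fun x => ‖x‖) ⁻¹' S := rfl
  rw [hset, ← lintegral_indicator (hS.preimage
    (show Measurable fun x : EuclideanSpace ℝ (Fin d) => ‖x‖ by fun_prop))]
  have : ∀ x : EuclideanSpace ℝ (Fin d),
      (((fun x : EuclideanSpace ℝ (Fin d) => ‖x‖) ⁻¹' S).indicator (fun x => f ‖x‖)) x
        = (S.indicator f) ‖x‖ := by
    intro x
    by_cases hx : ‖x‖ ∈ S <;> simp [hx, Set.indicator_apply]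
  rw [lintegral_congr this, my_lintegral_radial volume (S.indicator f) (hf.indicator hS)]
  rw [finrank_euclideanSpace_fin]
  congr 1
  have h2 : ∀ y : ℝ, ENNReal.ofReal (y ^ (d - 1)) * S.indicator f y
      = S.indicator (fun y => ENNReal.ofReal (y ^ (d - 1)) * f y) y := by
    intro y
    by_cases hy : y ∈ S <;> simp [hy]
  rw [lintegral_congr h2, lintegral_indicator hS, Measure.restrict_restrict hS]

end helpers

lemma my_lint_Ioc {p a b : ℝ} (hp : -1 < p) (h0a : 0 ≤ a) (hab : a ≤ b) :
    ∫⁻ y in Ioc a b, ENNReal.ofReal (y ^ p) ≤ ENNReal.ofReal (b ^ (p + 1) / (p + 1)) := by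
  have hint : IntegrableOn (fun y : ℝ => y ^ p) (Ioc a b) :=
    (intervalIntegrable_iff_integrableOn_Ioc_of_le hab).1
      (intervalIntegral.intervalIntegrable_rpow' hp)
  rw [← MeasureTheory.ofReal_integral_eq_lintegral_ofReal hint ?_]
  · apply ENNReal.ofReal_le_ofReal
    have h1 : ∫ y in Ioc a b, y ^ p = ∫ y in a..b, y ^ p := (intervalIntegral.integral_of_le hab).symm
    rw [h1, integral_rpow (Or.inl hp)]
    have hp1 : (0:ℝ) < p + 1 := by linarith
    have hnum : b ^ (p+1) - a ^ (p+1) ≤ b ^ (p+1) := sub_le_self _ (rpow_nonneg h0a _)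
    exact div_le_div_of_nonneg_right hnum hp1.le
  · filter_upwards [ae_restrict_mem measurableSet_Ioc] with y hy
    exact rpow_nonneg (h0a.trans hy.1.le) _

lemma my_lint_Ioi {p c : ℝ} (hp : p < -1) (hc : 0 < c) :
    ∫⁻ y in Ioi c, ENNReal.ofReal (y ^ p) ≤ ENNReal.ofReal (c ^ (p + 1) / (-(p + 1))) := by
  rw [← MeasureTheory.ofReal_integral_eq_lintegral_ofReal (integrableOn_Ioi_rpow_of_lt hp hc) ?_]
  · apply ENNReal.ofReal_le_ofReal
    rw [integral_Ioi_rpow_of_lt hp hc, neg_div, div_neg]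
  · filter_upwards [ae_restrict_mem measurableSet_Ioi] with y hy
    exact rpow_nonneg (hc.le.trans hy.le) _

lemma my_collapse {d : ℕ} (hd : 1 ≤ d) {y : ℝ} (hy : 0 < y) (q : ℝ) :
    (y ^ (d-1) : ℝ) * y ^ (q - d) = y ^ (q - 1) := by
  have h1 : (y:ℝ)^(d-1:ℕ) = y ^ ((d:ℝ)-1) := by
    rw [← Real.rpow_natCast y (d-1), Nat.cast_sub hd, Nat.cast_one]
  rw [h1, ← Real.rpow_add hy]
  ring_nf

lemma my_lint_seg_Ioc {d : ℕ} (hd : 1 ≤ d) {q a b c : ℝ} (hq : 0 < q) (h0a : 0 ≤ a)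
    (hab : a ≤ b) (hc : 0 ≤ c) :
    ∫⁻ y in Ioc a b, ENNReal.ofReal (y ^ (d-1)) * ENNReal.ofReal (y ^ (q - d) * c)
      ≤ ENNReal.ofReal (b ^ q / q * c) := by
  calc ∫⁻ y in Ioc a b, ENNReal.ofReal (y ^ (d-1)) * ENNReal.ofReal (y ^ (q - d) * c)
      = ∫⁻ y in Ioc a b, ENNReal.ofReal (y ^ (q-1)) * ENNReal.ofReal c := by
        apply setLIntegral_congr_fun measurableSet_Ioc (fun y hy => ?_)
        have hy0 : 0 < y := h0a.trans_lt hy.1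
        rw [← ENNReal.ofReal_mul (by positivity), ← mul_assoc, my_collapse hd hy0 q,
          ENNReal.ofReal_mul (rpow_nonneg hy0.le _)]
    _ = (∫⁻ y in Ioc a b, ENNReal.ofReal (y ^ (q-1))) * ENNReal.ofReal c :=
        lintegral_mul_const _ (by fun_prop)
    _ ≤ ENNReal.ofReal (b ^ (q-1+1) / (q-1+1)) * ENNReal.ofReal c :=
        mul_le_mul_of_nonneg_right (my_lint_Ioc (by linarith) h0a hab) zero_le
    _ = ENNReal.ofReal (b ^ q / q * c) := by
        rw [show q-1+1 = q by ring, ← ENNReal.ofReal_mul (div_nonneg (rpow_nonneg (h0a.trans hab) _) hq.le)]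

lemma my_lint_seg_Ioi {d : ℕ} (hd : 1 ≤ d) {q R c : ℝ} (hq : q < 0) (hR : 0 < R) (hc : 0 ≤ c) :
    ∫⁻ y in Ioi R, ENNReal.ofReal (y ^ (d-1)) * ENNReal.ofReal (y ^ (q - d) * c)
      ≤ ENNReal.ofReal (R ^ q / (-q) * c) := by
  calc ∫⁻ y in Ioi R, ENNReal.ofReal (y ^ (d-1)) * ENNReal.ofReal (y ^ (q - d) * c)
      = ∫⁻ y in Ioi R, ENNReal.ofReal (y ^ (q-1)) * ENNReal.ofReal c := by
        apply setLIntegral_congr_fun measurableSet_Ioi (fun y hy => ?_)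
        have hy0 : 0 < y := hR.trans hy
        rw [← ENNReal.ofReal_mul (by positivity), ← mul_assoc, my_collapse hd hy0 q,
          ENNReal.ofReal_mul (rpow_nonneg hy0.le _)]
    _ = (∫⁻ y in Ioi R, ENNReal.ofReal (y ^ (q-1))) * ENNReal.ofReal c :=
        lintegral_mul_const _ (by fun_prop)
    _ ≤ ENNReal.ofReal (R ^ (q-1+1) / (-(q-1+1))) * ENNReal.ofReal c :=
        mul_le_mul_of_nonneg_right (my_lint_Ioi (by linarith) hR) zero_le
    _ = ENNReal.ofReal (R ^ q / (-q) * c) := by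
        rw [show q-1+1 = q by ring, ← ENNReal.ofReal_mul]
        apply div_nonneg (rpow_nonneg hR.le _) (by linarith)

lemma key_scalar {k α h s r : ℝ} (hk : 0 < k) (hα : 0 ≤ α) (hh : 0 < h) (hh1 : h ≤ 1)
    (hαk : α < k) (hs : 1 ≤ s) (hsr : s ≤ r) :
    (1 + r ^ 2) ^ α * Real.sin ((h / 2) * r ^ k) ^ 2 / r ^ (2 * k)
      ≤ 2 ^ α * (if s ≤ h ^ (-1/k) then h ^ (2 - 2*α/k) else s ^ (2*α - 2*k)) := by
  have hr : 1 ≤ r := hs.trans hsr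
  have hr0 : 0 < r := lt_of_lt_of_le one_pos hr
  have hs0 : 0 < s := lt_of_lt_of_le one_pos hs
  have hrk0 : (0:ℝ) < r ^ (2*k) := rpow_pos_of_pos hr0 _
  have hfactor : (1 + r ^ 2) ^ α ≤ 2 ^ α * r ^ (2*α) := by
    have h1 : (1 + r ^ 2) ≤ 2 * r ^ 2 := by nlinarith
    calc (1 + r ^ 2) ^ α ≤ (2 * r ^ 2) ^ α :=
          rpow_le_rpow (by positivity) h1 hα
      _ = 2 ^ α * r ^ (2*α) := by
          rw [mul_rpow (by norm_num) (by positivity), ← rpow_natCast r 2, ← rpow_mul hr0.le]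
          norm_num [mul_comm]
  by_cases hcase : s ≤ h ^ (-1/k)
  · rw [if_pos hcase]
    by_cases hrR : r ≤ h ^ (-1/k)
    · have hsin : Real.sin ((h / 2) * r ^ k) ^ 2 ≤ ((h/2) * r ^ k) ^ 2 := Real.sin_sq_le_sq
      have hxsq : ((h/2) * r ^ k) ^ 2 = h^2/4 * r ^ (2*k) := by
        rw [mul_pow, ← rpow_natCast (r ^ k) 2, ← rpow_mul hr0.le]
        ring_nf
      calc (1 + r ^ 2) ^ α * Real.sin ((h / 2) * r ^ k) ^ 2 / r ^ (2 * k)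
          ≤ (2 ^ α * r ^ (2*α)) * (h^2/4 * r ^ (2*k)) / r ^ (2*k) := by
            rw [hxsq] at hsin
            gcongr
        _ = 2 ^ α * (r ^ (2*α) * (h^2/4)) := by field_simp
        _ ≤ 2 ^ α * h ^ (2 - 2*α/k) := by
            gcongr 2 ^ α * ?_
            have h1 : r ^ (2*α) ≤ (h ^ (-1/k)) ^ (2*α) :=
              rpow_le_rpow hr0.le hrR (by positivity)
            have h2 : (h ^ (-1/k)) ^ (2*α) = h ^ (-(2*α)/k) := by
              rw [← rpow_mul hh.le]; ring_nf
            have h3 : h^2 = h ^ (2:ℝ) := by norm_num [rpow_natCast]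
            calc r ^ (2*α) * (h^2/4) ≤ h ^ (-(2*α)/k) * (h ^ (2:ℝ)) := by
                  rw [← h2, ← h3]
                  have : h^2/4 ≤ h^2 := by nlinarith
                  exact mul_le_mul h1 this (by positivity) (by positivity)
              _ = h ^ (2 - 2*α/k) := by
                  rw [← rpow_add hh]; ring_nf
    · push_neg at hrR
      have hsin : Real.sin ((h / 2) * r ^ k) ^ 2 ≤ 1 := Real.sin_sq_le_one _
      calc (1 + r ^ 2) ^ α * Real.sin ((h / 2) * r ^ k) ^ 2 / r ^ (2 * k)
          ≤ (2 ^ α * r ^ (2*α)) * 1 / r ^ (2*k) := by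
            gcongr
        _ = 2 ^ α * r ^ (2*α - 2*k) := by
            rw [mul_one, mul_div_assoc, ← rpow_sub hr0]
        _ ≤ 2 ^ α * h ^ (2 - 2*α/k) := by
            gcongr 2 ^ α * ?_
            have h1 : r ^ (2*α - 2*k) ≤ (h ^ (-1/k)) ^ (2*α - 2*k) :=
              rpow_le_rpow_of_nonpos (rpow_pos_of_pos hh _) hrR.le (by linarith)
            have h2 : (h ^ (-1/k)) ^ (2*α - 2*k) = h ^ (2 - 2*α/k) := by
              rw [← rpow_mul hh.le]
              congr 1
              field_simp
              ring
            rw [← h2]; exact h1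
  · rw [if_neg hcase]
    push_neg at hcase
    have hsin : Real.sin ((h / 2) * r ^ k) ^ 2 ≤ 1 := Real.sin_sq_le_one _
    calc (1 + r ^ 2) ^ α * Real.sin ((h / 2) * r ^ k) ^ 2 / r ^ (2 * k)
        ≤ (2 ^ α * r ^ (2*α)) * 1 / r ^ (2*k) := by
          gcongr
      _ = 2 ^ α * r ^ (2*α - 2*k) := by
          rw [mul_one, mul_div_assoc, ← rpow_sub hr0]
      _ ≤ 2 ^ α * s ^ (2*α - 2*k) := by
          gcongr 2 ^ α * ?_
          exact rpow_le_rpow_of_nonpos hs0 hsr (by linarith)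

theorem stmt_10 (d : ℕ) (hd : 1 ≤ d) (k α β : ℝ) (hk : 0 < k) (hα : 0 ≤ α)
    (hβ0 : 0 < β) (hβd : β < d) (hβ : β < 2 * (k - α)) :
    ∃ C : ℝ, ∀ h ∈ Set.Ioc (0 : ℝ) 1, ∀ ξ : EuclideanSpace ℝ (Fin d),
      ∫⁻ ζ in {ζ : EuclideanSpace ℝ (Fin d) | 1 < ‖ξ - ζ‖},
          ENNReal.ofReal (‖ζ‖ ^ (β - d) * (1 + ‖ξ - ζ‖ ^ 2) ^ α *
            Real.sin ((h / 2) * ‖ξ - ζ‖ ^ k) ^ 2 / ‖ξ - ζ‖ ^ (2 * k))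
        ≤ ENNReal.ofReal (C * h ^ (2 - (β + 2 * α) / k)) := by
  classical
  haveI : Nonempty (Fin d) := ⟨⟨0, hd⟩⟩
  have hαk : α < k := by linarith
  have hden : 0 < 2*k - 2*α - β := by linarith
  set c₁ : ℝ := ((volume : Measure (EuclideanSpace ℝ (Fin d))).toSphere Set.univ).toReal with hc₁
  have hc₁0 : 0 ≤ c₁ := ENNReal.toReal_nonneg
  have hcS : (volume : Measure (EuclideanSpace ℝ (Fin d))).toSphere Set.univ
      = ENNReal.ofReal c₁ := (ENNReal.ofReal_toReal (measure_ne_top _ _)).symm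
  refine ⟨c₁ * 2^α * (3/β + 2/(2*k - 2*α - β)), ?_⟩
  rintro h ⟨hh0, hh1⟩ ξ
  have hk0 : (k:ℝ) ≠ 0 := ne_of_gt hk
  have hR1 : (1:ℝ) ≤ h ^ (-1/k) :=
    Real.one_le_rpow_of_pos_of_le_one_of_nonpos hh0 hh1 (by
      rw [neg_div]; exact neg_nonpos.mpr (by positivity))
  have hR0 : (0:ℝ) < h ^ (-1/k) := lt_of_lt_of_le one_pos hR1
  have hP0 : (0:ℝ) < h ^ (2 - (β + 2*α)/k) := rpow_pos_of_pos hh0 _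
  have hQ0 : (0:ℝ) < h ^ (2 - 2*α/k) := rpow_pos_of_pos hh0 _
  have h2α0 : (0:ℝ) ≤ (2:ℝ)^α := rpow_nonneg (by norm_num) α
  have hQP : h ^ (2 - 2*α/k) ≤ h ^ (2 - (β + 2*α)/k) := by
    apply rpow_le_rpow_of_exponent_ge hh0 hh1
    have h2 : 2*α/k ≤ (β + 2*α)/k :=
      div_le_div_of_nonneg_right (by linarith) hk.le
    linarith
  -- the one-dimensional profile bounding function
  set fW : ℝ → ℝ≥0∞ := fun y => ENNReal.ofReal (y ^ (β - (d:ℝ)) *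
      ((if y ≤ h ^ (-1/k) then h ^ (2 - 2*α/k) else y ^ (2*α - 2*k)) * 2^α)) with hfW
  have hmfW : Measurable fW := by
    rw [hfW]
    apply ENNReal.measurable_ofReal.comp
    apply Measurable.mul (by fun_prop)
    apply Measurable.mul ?_ measurable_const
    exact Measurable.ite (measurableSet_le measurable_id measurable_const)
      measurable_const (by fun_prop)
  set fA : ℝ → ℝ≥0∞ := fun y => ENNReal.ofReal (y ^ (β - (d:ℝ)) *
      (h ^ (2 - 2*α/k) * 2^α)) with hfA
  have hmfA : Measurable fA := by rw [hfA]; fun_prop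
  -- the three sets
  set SA : Set (EuclideanSpace ℝ (Fin d)) :=
    {ζ | 1 < ‖ξ - ζ‖} ∩ {ζ | ‖ζ‖ ≤ 1} with hSA
  set SB : Set (EuclideanSpace ℝ (Fin d)) :=
    {ζ | 1 < ‖ξ - ζ‖} ∩ {ζ | ‖ξ - ζ‖ ≤ ‖ζ‖} with hSB
  set SC : Set (EuclideanSpace ℝ (Fin d)) :=
    {ζ | 1 < ‖ζ‖} ∩ {ζ | ‖ζ‖ ≤ ‖ξ - ζ‖} with hSC
  have hcover : {ζ : EuclideanSpace ℝ (Fin d) | 1 < ‖ξ - ζ‖} ⊆ SA ∪ (SB ∪ SC) := by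
    intro ζ hζ
    by_cases h1 : ‖ζ‖ ≤ 1
    · exact Or.inl ⟨hζ, h1⟩
    · push_neg at h1
      rcases le_total ‖ξ - ζ‖ ‖ζ‖ with hle | hle
      · exact Or.inr (Or.inl ⟨hζ, hle⟩)
      · exact Or.inr (Or.inr ⟨h1, hle⟩)
  -- the W bound
  have hW : ∫⁻ x in {x : EuclideanSpace ℝ (Fin d) | ‖x‖ ∈ Ioi 1}, fW ‖x‖
      ≤ ENNReal.ofReal (c₁ * ((h ^ (-1/k)) ^ β / β * (h ^ (2 - 2*α/k) * 2^α)
          + (h ^ (-1/k)) ^ (β + 2*α - 2*k) / (2*k - 2*α - β) * 2^α)) := by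
    rw [my_radial_set hd (Ioi 1) measurableSet_Ioi fW hmfW]
    rw [show Ioi (1:ℝ) ∩ Ioi 0 = Ioi 1 from
      Set.inter_eq_left.2 (fun y hy => mem_Ioi.2 (lt_trans zero_lt_one (mem_Ioi.1 hy)))]
    rw [← Ioc_union_Ioi_eq_Ioi hR1, hcS]
    calc ENNReal.ofReal c₁ * ∫⁻ y in Ioc 1 (h ^ (-1/k)) ∪ Ioi (h ^ (-1/k)),
            ENNReal.ofReal (y ^ (d-1)) * fW y
        ≤ ENNReal.ofReal c₁ * ((∫⁻ y in Ioc 1 (h ^ (-1/k)), ENNReal.ofReal (y ^ (d-1)) * fW y)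
            + ∫⁻ y in Ioi (h ^ (-1/k)), ENNReal.ofReal (y ^ (d-1)) * fW y) :=
          mul_le_mul_of_nonneg_left (lintegral_union_le _ _ _) zero_le
      _ ≤ ENNReal.ofReal c₁ *
            (ENNReal.ofReal ((h ^ (-1/k)) ^ β / β * (h ^ (2 - 2*α/k) * 2^α))
              + ENNReal.ofReal ((h ^ (-1/k)) ^ (β + 2*α - 2*k) / (2*k - 2*α - β) * 2^α)) := by
          apply mul_le_mul_of_nonneg_left ?_ zero_le
          apply add_le_add
          · -- Ioc 1 R piece
            have hcongr : ∫⁻ y in Ioc 1 (h ^ (-1/k)), ENNReal.ofReal (y ^ (d-1)) * fW y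
                = ∫⁻ y in Ioc 1 (h ^ (-1/k)), ENNReal.ofReal (y ^ (d-1)) *
                    ENNReal.ofReal (y ^ (β - (d:ℝ)) * (h ^ (2 - 2*α/k) * 2^α)) := by
              apply setLIntegral_congr_fun measurableSet_Ioc (fun y hy => ?_)
              rw [hfW]
              simp only [if_pos hy.2]
            rw [hcongr]
            exact my_lint_seg_Ioc hd hβ0 zero_le_one hR1 (by positivity)
          · -- Ioi R piece
            have hcongr : ∫⁻ y in Ioi (h ^ (-1/k)), ENNReal.ofReal (y ^ (d-1)) * fW y
                = ∫⁻ y in Ioi (h ^ (-1/k)), ENNReal.ofReal (y ^ (d-1)) *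
                    ENNReal.ofReal (y ^ ((β + 2*α - 2*k) - (d:ℝ)) * 2^α) := by
              apply setLIntegral_congr_fun measurableSet_Ioi (fun y hy => ?_)
              have hy0 : (0:ℝ) < y := hR0.trans hy
              rw [hfW]
              simp only [if_neg (not_le.mpr (mem_Ioi.1 hy))]
              congr 1
              rw [← mul_assoc, ← Real.rpow_add hy0]
              ring_nf
            rw [hcongr]
            have := my_lint_seg_Ioi hd (q := β + 2*α - 2*k) (R := h ^ (-1/k)) (c := 2^α)
              (by linarith) hR0 h2α0
            rw [show -(β + 2*α - 2*k) = 2*k - 2*α - β by ring] at this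
            exact this
      _ = ENNReal.ofReal (c₁ * ((h ^ (-1/k)) ^ β / β * (h ^ (2 - 2*α/k) * 2^α)
            + (h ^ (-1/k)) ^ (β + 2*α - 2*k) / (2*k - 2*α - β) * 2^α)) := by
          rw [← ENNReal.ofReal_add (by positivity) (by positivity),
            ← ENNReal.ofReal_mul hc₁0]
  -- piece A
  have hA : ∫⁻ ζ in SA, ENNReal.ofReal (‖ζ‖ ^ (β - (d:ℝ)) * (1 + ‖ξ - ζ‖ ^ 2) ^ α *
        Real.sin ((h / 2) * ‖ξ - ζ‖ ^ k) ^ 2 / ‖ξ - ζ‖ ^ (2 * k))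
      ≤ ENNReal.ofReal (c₁ * ((1:ℝ) ^ β / β * (h ^ (2 - 2*α/k) * 2^α))) := by
    have step1 : ∫⁻ ζ in SA, ENNReal.ofReal (‖ζ‖ ^ (β - (d:ℝ)) * (1 + ‖ξ - ζ‖ ^ 2) ^ α *
          Real.sin ((h / 2) * ‖ξ - ζ‖ ^ k) ^ 2 / ‖ξ - ζ‖ ^ (2 * k))
        ≤ ∫⁻ ζ in SA, fA ‖ζ‖ := by
      apply setLIntegral_mono (hmfA.comp (by fun_prop))
      intro ζ hζ
      obtain ⟨h1r, hζ1⟩ := hζ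
      rw [hfA]
      apply ENNReal.ofReal_le_ofReal
      have hkey := key_scalar hk hα hh0 hh1 hαk (le_refl 1) (le_of_lt h1r)
      rw [if_pos hR1] at hkey
      calc ‖ζ‖ ^ (β - (d:ℝ)) * (1 + ‖ξ - ζ‖ ^ 2) ^ α *
            Real.sin ((h / 2) * ‖ξ - ζ‖ ^ k) ^ 2 / ‖ξ - ζ‖ ^ (2 * k)
          = ‖ζ‖ ^ (β - (d:ℝ)) * ((1 + ‖ξ - ζ‖ ^ 2) ^ α *
            Real.sin ((h / 2) * ‖ξ - ζ‖ ^ k) ^ 2 / ‖ξ - ζ‖ ^ (2 * k)) := by ring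
        _ ≤ ‖ζ‖ ^ (β - (d:ℝ)) * (2^α * h ^ (2 - 2*α/k)) :=
            mul_le_mul_of_nonneg_left hkey (rpow_nonneg (norm_nonneg _) _)
        _ = ‖ζ‖ ^ (β - (d:ℝ)) * (h ^ (2 - 2*α/k) * 2^α) := by ring
    refine step1.trans ?_
    have step2 : ∫⁻ ζ in SA, fA ‖ζ‖
        ≤ ∫⁻ ζ in {ζ : EuclideanSpace ℝ (Fin d) | ‖ζ‖ ∈ Iic 1}, fA ‖ζ‖ :=
      lintegral_mono_set (fun ζ hζ => hζ.2)
    refine step2.trans ?_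
    rw [my_radial_set hd (Iic 1) measurableSet_Iic fA hmfA]
    rw [show Iic (1:ℝ) ∩ Ioi 0 = Ioc 0 1 from by ext y; simp [mem_Ioc, and_comm]]
    rw [hcS]
    calc ENNReal.ofReal c₁ * ∫⁻ y in Ioc (0:ℝ) 1, ENNReal.ofReal (y ^ (d-1)) * fA y
        ≤ ENNReal.ofReal c₁ * ENNReal.ofReal ((1:ℝ) ^ β / β * (h ^ (2 - 2*α/k) * 2^α)) := by
          apply mul_le_mul_of_nonneg_left ?_ zero_le
          exact my_lint_seg_Ioc hd hβ0 le_rfl zero_le_one (by positivity)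
      _ = ENNReal.ofReal (c₁ * ((1:ℝ) ^ β / β * (h ^ (2 - 2*α/k) * 2^α))) := by
          rw [← ENNReal.ofReal_mul hc₁0]
  -- piece B
  have hB : ∫⁻ ζ in SB, ENNReal.ofReal (‖ζ‖ ^ (β - (d:ℝ)) * (1 + ‖ξ - ζ‖ ^ 2) ^ α *
        Real.sin ((h / 2) * ‖ξ - ζ‖ ^ k) ^ 2 / ‖ξ - ζ‖ ^ (2 * k))
      ≤ ∫⁻ x in {x : EuclideanSpace ℝ (Fin d) | ‖x‖ ∈ Ioi 1}, fW ‖x‖ := by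
    have hmnorm : Measurable fun x : EuclideanSpace ℝ (Fin d) => ‖x‖ := by fun_prop
    have hsetIoi : MeasurableSet {x : EuclideanSpace ℝ (Fin d) | ‖x‖ ∈ Ioi 1} :=
      measurableSet_Ioi.preimage hmnorm
    have hmind : Measurable fun x : EuclideanSpace ℝ (Fin d) =>
        ({x : EuclideanSpace ℝ (Fin d) | ‖x‖ ∈ Ioi 1}.indicator (fun x => fW ‖x‖)) x :=
      Measurable.indicator (hmfW.comp hmnorm) hsetIoi
    calc ∫⁻ ζ in SB, ENNReal.ofReal (‖ζ‖ ^ (β - (d:ℝ)) * (1 + ‖ξ - ζ‖ ^ 2) ^ α *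
          Real.sin ((h / 2) * ‖ξ - ζ‖ ^ k) ^ 2 / ‖ξ - ζ‖ ^ (2 * k))
        ≤ ∫⁻ ζ in SB, ({x : EuclideanSpace ℝ (Fin d) | ‖x‖ ∈ Ioi 1}.indicator
            (fun x => fW ‖x‖)) (ξ - ζ) := by
          apply setLIntegral_mono (show Measurable fun ζ : EuclideanSpace ℝ (Fin d) =>
            ({x : EuclideanSpace ℝ (Fin d) | ‖x‖ ∈ Ioi 1}.indicator (fun x => fW ‖x‖)) (ξ - ζ)
            from hmind.comp (measurable_const.sub measurable_id))
          intro ζ hζ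
          obtain ⟨h1r, hrs⟩ := hζ
          beta_reduce
          rw [Set.indicator_of_mem (show (ξ - ζ) ∈ {x : EuclideanSpace ℝ (Fin d) | ‖x‖ ∈ Ioi 1} from h1r), hfW]
          apply ENNReal.ofReal_le_ofReal
          have hr0 : (0:ℝ) < ‖ξ - ζ‖ := lt_trans one_pos h1r
          have hkey := key_scalar hk hα hh0 hh1 hαk (le_of_lt h1r) (le_refl ‖ξ - ζ‖)
          have hnorm : ‖ζ‖ ^ (β - (d:ℝ)) ≤ ‖ξ - ζ‖ ^ (β - (d:ℝ)) :=
            rpow_le_rpow_of_nonpos hr0 hrs (by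
              have : (1:ℝ) ≤ (d:ℝ) := by exact_mod_cast hd
              linarith)
          calc ‖ζ‖ ^ (β - (d:ℝ)) * (1 + ‖ξ - ζ‖ ^ 2) ^ α *
                Real.sin ((h / 2) * ‖ξ - ζ‖ ^ k) ^ 2 / ‖ξ - ζ‖ ^ (2 * k)
              = ‖ζ‖ ^ (β - (d:ℝ)) * ((1 + ‖ξ - ζ‖ ^ 2) ^ α *
                Real.sin ((h / 2) * ‖ξ - ζ‖ ^ k) ^ 2 / ‖ξ - ζ‖ ^ (2 * k)) := by ring
            _ ≤ ‖ξ - ζ‖ ^ (β - (d:ℝ)) * (2^α *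
                (if ‖ξ - ζ‖ ≤ h ^ (-1/k) then h ^ (2 - 2*α/k) else ‖ξ - ζ‖ ^ (2*α - 2*k))) := by
                apply mul_le_mul hnorm hkey ?_ (rpow_nonneg (norm_nonneg _) _)
                positivity
            _ = ‖ξ - ζ‖ ^ (β - (d:ℝ)) *
                ((if ‖ξ - ζ‖ ≤ h ^ (-1/k) then h ^ (2 - 2*α/k) else ‖ξ - ζ‖ ^ (2*α - 2*k)) * 2^α) := by
                ring
      _ ≤ ∫⁻ ζ, ({x : EuclideanSpace ℝ (Fin d) | ‖x‖ ∈ Ioi 1}.indicator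
            (fun x => fW ‖x‖)) (ξ - ζ) := setLIntegral_le_lintegral _ _
      _ = ∫⁻ x, ({x : EuclideanSpace ℝ (Fin d) | ‖x‖ ∈ Ioi 1}.indicator
            (fun x => fW ‖x‖)) x :=
          (Measure.measurePreserving_sub_left volume ξ).lintegral_comp hmind
      _ = ∫⁻ x in {x : EuclideanSpace ℝ (Fin d) | ‖x‖ ∈ Ioi 1}, fW ‖x‖ :=
          lintegral_indicator hsetIoi _
  -- piece C
  have hC : ∫⁻ ζ in SC, ENNReal.ofReal (‖ζ‖ ^ (β - (d:ℝ)) * (1 + ‖ξ - ζ‖ ^ 2) ^ α *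
        Real.sin ((h / 2) * ‖ξ - ζ‖ ^ k) ^ 2 / ‖ξ - ζ‖ ^ (2 * k))
      ≤ ∫⁻ x in {x : EuclideanSpace ℝ (Fin d) | ‖x‖ ∈ Ioi 1}, fW ‖x‖ := by
    refine le_trans (setLIntegral_mono (hmfW.comp (by fun_prop)) ?_)
      (lintegral_mono_set (fun ζ hζ => hζ.1))
    intro ζ hζ
    obtain ⟨h1s, hsr⟩ := hζ
    rw [hfW]
    apply ENNReal.ofReal_le_ofReal
    have hkey := key_scalar hk hα hh0 hh1 hαk (le_of_lt h1s) hsr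
    calc ‖ζ‖ ^ (β - (d:ℝ)) * (1 + ‖ξ - ζ‖ ^ 2) ^ α *
          Real.sin ((h / 2) * ‖ξ - ζ‖ ^ k) ^ 2 / ‖ξ - ζ‖ ^ (2 * k)
        = ‖ζ‖ ^ (β - (d:ℝ)) * ((1 + ‖ξ - ζ‖ ^ 2) ^ α *
          Real.sin ((h / 2) * ‖ξ - ζ‖ ^ k) ^ 2 / ‖ξ - ζ‖ ^ (2 * k)) := by ring
      _ ≤ ‖ζ‖ ^ (β - (d:ℝ)) * (2^α *
          (if ‖ζ‖ ≤ h ^ (-1/k) then h ^ (2 - 2*α/k) else ‖ζ‖ ^ (2*α - 2*k))) :=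
          mul_le_mul_of_nonneg_left hkey (rpow_nonneg (norm_nonneg _) _)
      _ = ‖ζ‖ ^ (β - (d:ℝ)) *
          ((if ‖ζ‖ ≤ h ^ (-1/k) then h ^ (2 - 2*α/k) else ‖ζ‖ ^ (2*α - 2*k)) * 2^α) := by ring
  -- combine
  have hfinal : ENNReal.ofReal (c₁ * ((1:ℝ) ^ β / β * (h ^ (2 - 2*α/k) * 2^α)))
      + (ENNReal.ofReal (c₁ * ((h ^ (-1/k)) ^ β / β * (h ^ (2 - 2*α/k) * 2^α)
          + (h ^ (-1/k)) ^ (β + 2*α - 2*k) / (2*k - 2*α - β) * 2^α))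
        + ENNReal.ofReal (c₁ * ((h ^ (-1/k)) ^ β / β * (h ^ (2 - 2*α/k) * 2^α)
          + (h ^ (-1/k)) ^ (β + 2*α - 2*k) / (2*k - 2*α - β) * 2^α)))
      ≤ ENNReal.ofReal (c₁ * 2^α * (3/β + 2/(2*k - 2*α - β)) * h ^ (2 - (β + 2*α)/k)) := by
    rw [← ENNReal.ofReal_add (by positivity) (by positivity),
      ← ENNReal.ofReal_add (by positivity) (by positivity)]
    apply ENNReal.ofReal_le_ofReal
    have e1 : (h ^ (-1/k)) ^ β * h ^ (2 - 2*α/k) = h ^ (2 - (β + 2*α)/k) := by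
      rw [← Real.rpow_mul hh0.le, ← Real.rpow_add hh0]
      congr 1
      field_simp
      ring
    have e2 : (h ^ (-1/k)) ^ (β + 2*α - 2*k) = h ^ (2 - (β + 2*α)/k) := by
      rw [← Real.rpow_mul hh0.le]
      congr 1
      field_simp
      ring
    rw [Real.one_rpow]
    have hc2 : (0:ℝ) ≤ c₁ * 2^α / β := by positivity
    calc c₁ * (1 / β * (h ^ (2 - 2*α/k) * 2^α))
          + (c₁ * ((h ^ (-1/k)) ^ β / β * (h ^ (2 - 2*α/k) * 2^α)
              + (h ^ (-1/k)) ^ (β + 2*α - 2*k) / (2*k - 2*α - β) * 2^α)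
            + c₁ * ((h ^ (-1/k)) ^ β / β * (h ^ (2 - 2*α/k) * 2^α)
              + (h ^ (-1/k)) ^ (β + 2*α - 2*k) / (2*k - 2*α - β) * 2^α))
        = c₁ * 2^α / β * h ^ (2 - 2*α/k)
          + 2 * (c₁ * 2^α / β * ((h ^ (-1/k)) ^ β * h ^ (2 - 2*α/k))
            + c₁ * 2^α / (2*k - 2*α - β) * (h ^ (-1/k)) ^ (β + 2*α - 2*k)) := by ring
      _ = c₁ * 2^α / β * h ^ (2 - 2*α/k)
          + 2 * (c₁ * 2^α / β * h ^ (2 - (β + 2*α)/k)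
            + c₁ * 2^α / (2*k - 2*α - β) * h ^ (2 - (β + 2*α)/k)) := by rw [e1, e2]
      _ ≤ c₁ * 2^α / β * h ^ (2 - (β + 2*α)/k)
          + 2 * (c₁ * 2^α / β * h ^ (2 - (β + 2*α)/k)
            + c₁ * 2^α / (2*k - 2*α - β) * h ^ (2 - (β + 2*α)/k)) :=
          add_le_add_left (mul_le_mul_of_nonneg_left hQP hc2) _
      _ = c₁ * 2^α * (3/β + 2/(2*k - 2*α - β)) * h ^ (2 - (β + 2*α)/k) := by ring
  calc ∫⁻ ζ in {ζ : EuclideanSpace ℝ (Fin d) | 1 < ‖ξ - ζ‖},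
        ENNReal.ofReal (‖ζ‖ ^ (β - (d:ℝ)) * (1 + ‖ξ - ζ‖ ^ 2) ^ α *
          Real.sin ((h / 2) * ‖ξ - ζ‖ ^ k) ^ 2 / ‖ξ - ζ‖ ^ (2 * k))
      ≤ ∫⁻ ζ in SA ∪ (SB ∪ SC), ENNReal.ofReal (‖ζ‖ ^ (β - (d:ℝ)) * (1 + ‖ξ - ζ‖ ^ 2) ^ α *
          Real.sin ((h / 2) * ‖ξ - ζ‖ ^ k) ^ 2 / ‖ξ - ζ‖ ^ (2 * k)) :=
        lintegral_mono_set hcover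
    _ ≤ (∫⁻ ζ in SA, ENNReal.ofReal (‖ζ‖ ^ (β - (d:ℝ)) * (1 + ‖ξ - ζ‖ ^ 2) ^ α *
          Real.sin ((h / 2) * ‖ξ - ζ‖ ^ k) ^ 2 / ‖ξ - ζ‖ ^ (2 * k)))
        + ∫⁻ ζ in SB ∪ SC, ENNReal.ofReal (‖ζ‖ ^ (β - (d:ℝ)) * (1 + ‖ξ - ζ‖ ^ 2) ^ α *
          Real.sin ((h / 2) * ‖ξ - ζ‖ ^ k) ^ 2 / ‖ξ - ζ‖ ^ (2 * k)) :=
        lintegral_union_le _ _ _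
    _ ≤ (∫⁻ ζ in SA, ENNReal.ofReal (‖ζ‖ ^ (β - (d:ℝ)) * (1 + ‖ξ - ζ‖ ^ 2) ^ α *
          Real.sin ((h / 2) * ‖ξ - ζ‖ ^ k) ^ 2 / ‖ξ - ζ‖ ^ (2 * k)))
        + ((∫⁻ ζ in SB, ENNReal.ofReal (‖ζ‖ ^ (β - (d:ℝ)) * (1 + ‖ξ - ζ‖ ^ 2) ^ α *
          Real.sin ((h / 2) * ‖ξ - ζ‖ ^ k) ^ 2 / ‖ξ - ζ‖ ^ (2 * k)))
          + ∫⁻ ζ in SC, ENNReal.ofReal (‖ζ‖ ^ (β - (d:ℝ)) * (1 + ‖ξ - ζ‖ ^ 2) ^ α *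
          Real.sin ((h / 2) * ‖ξ - ζ‖ ^ k) ^ 2 / ‖ξ - ζ‖ ^ (2 * k))) :=
        add_le_add_right (lintegral_union_le _ _ _) _
    _ ≤ ENNReal.ofReal (c₁ * ((1:ℝ) ^ β / β * (h ^ (2 - 2*α/k) * 2^α)))
        + (ENNReal.ofReal (c₁ * ((h ^ (-1/k)) ^ β / β * (h ^ (2 - 2*α/k) * 2^α)
            + (h ^ (-1/k)) ^ (β + 2*α - 2*k) / (2*k - 2*α - β) * 2^α))
          + ENNReal.ofReal (c₁ * ((h ^ (-1/k)) ^ β / β * (h ^ (2 - 2*α/k) * 2^α)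
            + (h ^ (-1/k)) ^ (β + 2*α - 2*k) / (2*k - 2*α - β) * 2^α))) :=
        add_le_add hA (add_le_add (hB.trans hW) (hC.trans hW))
    _ ≤ ENNReal.ofReal (c₁ * 2^α * (3/β + 2/(2*k - 2*α - β)) * h ^ (2 - (β + 2*α)/k)) := hfinal
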